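/- arXiv:1810.05254 — 3 statements merged into one kernel-verified Lean document; each statement's English description precedes it below -/
import Mathlib

section
/- Let K be a field of characteristic 0 and n ≥ 1. The n! left-normed multilinear monomials T_n = {(…((x_{σ(1)} x_{σ(2)}) x_{σ(3)})…) x_{σ(n)} : σ ∈ S_n} are linearly independent in the multilinear part P_n of the free assosymmetric algebra on x_1, …, x_n, and S_n acts on T_n simply transitively; consequently, the span K·T_n of T_n is isomorphic as a K[S_n]-module to the left regular module K[S_n] (the monoid algebra of S_n over K). -/
noncomputable section

/-- The associator `(x, y, z) = (xy)z - x(yz)`. -/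
def assoc' {R : Type*} [NonUnitalNonAssocRing R] (x y z : R) : R :=
  x * y * z - x * (y * z)

/-- The commutator `[x, y] = xy - yx`. -/
def brk {R : Type*} [NonUnitalNonAssocRing R] (x y : R) : R :=
  x * y - y * x

/-- Generators of the two-sided ideal of the assosymmetric relations in the free
nonunital nonassociative algebra: the elements `(a,b,c) - (a,c,b)` and `(a,b,c) - (b,a,c)`,
together with everything obtained from them by (iterated) left and right multiplications. -/
inductive IsAssosymRel (K : Type*) [Field K] (X : Type*) :
    FreeNonUnitalNonAssocAlgebra K X → Prop
  | rel₁ (a b c : FreeNonUnitalNonAssocAlgebra K X) :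
      IsAssosymRel K X (assoc' a b c - assoc' a c b)
  | rel₂ (a b c : FreeNonUnitalNonAssocAlgebra K X) :
      IsAssosymRel K X (assoc' a b c - assoc' b a c)
  | mul_left (r x : FreeNonUnitalNonAssocAlgebra K X) :
      IsAssosymRel K X x → IsAssosymRel K X (r * x)
  | mul_right (r x : FreeNonUnitalNonAssocAlgebra K X) :
      IsAssosymRel K X x → IsAssosymRel K X (x * r)

/-- The two-sided ideal of the assosymmetric relations, as a `K`-subspace of the free
nonunital nonassociative algebra. -/
def assosymIdeal (K : Type*) [Field K] (X : Type*) :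
    Submodule K (FreeNonUnitalNonAssocAlgebra K X) :=
  Submodule.span K {x | IsAssosymRel K X x}

/-- The free assosymmetric algebra on `X` (as a `K`-vector space): the quotient of the free
nonunital nonassociative algebra on `X` by the ideal of the assosymmetric relations. -/
abbrev FreeAssosym (K : Type*) [Field K] (X : Type*) :=
  FreeNonUnitalNonAssocAlgebra K X ⧸ assosymIdeal K X

/-- The image in the free assosymmetric algebra of the nonassociative monomial `w`. -/
def mkMono (K : Type*) [Field K] {X : Type*} (w : FreeMagma X) : FreeAssosym K X :=
  (assosymIdeal K X).mkQ (MonoidAlgebra.single w 1)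

/-- The list of variables (with multiplicities, in order) of a nonassociative monomial. -/
def FreeMagma.varList {X : Type*} : FreeMagma X → List X
  | FreeMagma.of x => [x]
  | FreeMagma.mul a b => a.varList ++ b.varList

/-- The multilinear part `P n`: the span of the images of the multilinear monomials
of degree `n` in the variables `x_0, …, x_{n-1}`. -/
def multilinearPart (K : Type*) [Field K] (n : ℕ) : Submodule K (FreeAssosym K (Fin n)) :=
  Submodule.span K
    {q | ∃ w : FreeMagma (Fin n), (∀ i, w.varList.count i = 1) ∧ q = mkMono K w}

/-- Relabelling of variables along `σ`, as a nonunital algebra endomorphism of the free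
nonunital nonassociative algebra. -/
def relabel (K : Type*) [Field K] {n : ℕ} (σ : Equiv.Perm (Fin n)) :
    FreeNonUnitalNonAssocAlgebra K (Fin n) →ₙₐ[K] FreeNonUnitalNonAssocAlgebra K (Fin n) :=
  MonoidAlgebra.mapDomainNonUnitalAlgHom K K (FreeMagma.map (⇑σ))

lemma relabel_isAssosymRel {K : Type*} [Field K] {n : ℕ} (σ : Equiv.Perm (Fin n))
    {x : FreeNonUnitalNonAssocAlgebra K (Fin n)} (hx : IsAssosymRel K (Fin n) x) :
    IsAssosymRel K (Fin n) (relabel K σ x) := by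
  induction hx with
  | rel₁ a b c =>
      simpa [assoc', map_sub, map_mul] using
        IsAssosymRel.rel₁ (relabel K σ a) (relabel K σ b) (relabel K σ c)
  | rel₂ a b c =>
      simpa [assoc', map_sub, map_mul] using
        IsAssosymRel.rel₂ (relabel K σ a) (relabel K σ b) (relabel K σ c)
  | mul_left r x _ ih =>
      simpa [map_mul] using IsAssosymRel.mul_left (relabel K σ r) _ ih
  | mul_right r x _ ih =>
      simpa [map_mul] using IsAssosymRel.mul_right (relabel K σ r) _ ih

/-- The relabelling along `σ`, as a `K`-linear endomorphism. -/
def relabelₗ (K : Type*) [Field K] {n : ℕ} (σ : Equiv.Perm (Fin n)) :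
    FreeNonUnitalNonAssocAlgebra K (Fin n) →ₗ[K] FreeNonUnitalNonAssocAlgebra K (Fin n) where
  toFun := relabel K σ
  map_add' := map_add _
  map_smul' := map_smul _

lemma assosymIdeal_le_comap (K : Type*) [Field K] {n : ℕ} (σ : Equiv.Perm (Fin n)) :
    assosymIdeal K (Fin n) ≤ (assosymIdeal K (Fin n)).comap (relabelₗ K σ) := by
  rw [← Submodule.map_le_iff_le_comap, assosymIdeal, Submodule.map_span]
  refine Submodule.span_le.2 ?_
  rintro _ ⟨x, hx, rfl⟩
  exact Submodule.subset_span (relabel_isAssosymRel σ hx)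

/-- The natural action of a permutation `σ` of the variables on the free assosymmetric
algebra (the map `x_i ↦ x_{σ(i)}`), as a `K`-linear endomorphism. -/
def permAct (K : Type*) [Field K] {n : ℕ} (σ : Equiv.Perm (Fin n)) :
    FreeAssosym K (Fin n) →ₗ[K] FreeAssosym K (Fin n) :=
  Submodule.mapQ _ _ (relabelₗ K σ) (assosymIdeal_le_comap K σ)

/-- The left-normed product of a list: `(…((x₁x₂)x₃)…)xₙ` (zero for the empty list). -/
def leftNormed {R : Type*} [NonUnitalNonAssocRing R] : List R → R
  | [] => 0
  | x :: xs => xs.foldl (· * ·) x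

/-- The left-normed multilinear monomial `(…((x_{σ(1)}x_{σ(2)})x_{σ(3)})…)x_{σ(n)}`. -/
def lnMono (K : Type*) [Field K] {n : ℕ} (σ : Equiv.Perm (Fin n)) :
    FreeNonUnitalNonAssocAlgebra K (Fin n) :=
  leftNormed ((List.finRange n).map fun i => FreeNonUnitalNonAssocAlgebra.of K (σ i))

/-- The set `T_n` of images of the left-normed multilinear monomials. -/
def TnSet (K : Type*) [Field K] (n : ℕ) : Set (FreeAssosym K (Fin n)) :=
  Set.range fun σ : Equiv.Perm (Fin n) => (assosymIdeal K (Fin n)).mkQ (lnMono K σ)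

/-- `[… [[(x₁,x₂,x₃),x₄],x₅] …, xₘ]`: nested commutators applied to an associator of the
first three entries of the list (zero if the list has fewer than three entries). -/
def nestedBrk {R : Type*} [NonUnitalNonAssocRing R] : List R → R
  | x :: y :: z :: rest => rest.foldl brk (assoc' x y z)
  | _ => 0

/-- The monomial of the second type:
`x_{σ(1)}(x_{σ(2)}(⋯ x_{σ(k)}[⋯[(x_{σ(k+1)},x_{σ(k+2)},x_{σ(k+3)}),x_{σ(k+4)}],…,x_{σ(n)}]⋯))`. -/
def mono₂ (K : Type*) [Field K] {n : ℕ} (σ : Equiv.Perm (Fin n)) (k : ℕ) :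
    FreeNonUnitalNonAssocAlgebra K (Fin n) :=
  (((List.finRange n).take k).map fun i => FreeNonUnitalNonAssocAlgebra.of K (σ i)).foldr
    (· * ·)
    (nestedBrk (((List.finRange n).drop k).map fun i => FreeNonUnitalNonAssocAlgebra.of K (σ i)))

/-- The set `T_{k,n-k}` of images of second-type monomials with increasing head and tail. -/
def TknSet (K : Type*) [Field K] (n k : ℕ) : Set (FreeAssosym K (Fin n)) :=
  {q | ∃ σ : Equiv.Perm (Fin n),
    StrictMonoOn (⇑σ) {i : Fin n | (i : ℕ) < k} ∧
    StrictMonoOn (⇑σ) {i : Fin n | k ≤ (i : ℕ)} ∧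
    q = (assosymIdeal K (Fin n)).mkQ (mono₂ K σ k)}



section AuxProof

variable (K : Type*) [Field K] {X : Type*}

/-- The canonical map to the free associative envelope (the magma algebra of the
free monoid). -/
def toAssocHom (X : Type*) :
    FreeNonUnitalNonAssocAlgebra K X →ₙₐ[K] MonoidAlgebra K (FreeMonoid X) :=
  MonoidAlgebra.mapDomainNonUnitalAlgHom K K
    (FreeMagma.lift (FreeMonoid.of : X → FreeMonoid X))

lemma toAssocHom_rel {x : FreeNonUnitalNonAssocAlgebra K X} (hx : IsAssosymRel K X x) :
    toAssocHom K X x = 0 := by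
  induction hx with
  | rel₁ a b c => simp [assoc', map_sub, map_mul, mul_assoc]
  | rel₂ a b c => simp [assoc', map_sub, map_mul, mul_assoc]
  | mul_left r x _ ih => rw [map_mul, ih, mul_zero]
  | mul_right r x _ ih => rw [map_mul, ih, zero_mul]

/-- `toAssocHom` as a linear map. -/
def toAssocₗ : FreeNonUnitalNonAssocAlgebra K X →ₗ[K] MonoidAlgebra K (FreeMonoid X) where
  toFun := toAssocHom K X
  map_add' := map_add _
  map_smul' := map_smul _

lemma assosymIdeal_le_ker :
    assosymIdeal K X ≤ LinearMap.ker (toAssocₗ K (X := X)) :=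
  Submodule.span_le.2 fun _x hx => toAssocHom_rel K hx

/-- The induced linear map on the free assosymmetric algebra. -/
def toAssocQ : FreeAssosym K X →ₗ[K] MonoidAlgebra K (FreeMonoid X) :=
  Submodule.liftQ _ (toAssocₗ K) (assosymIdeal_le_ker K)

lemma toAssocQ_mkQ (x : FreeNonUnitalNonAssocAlgebra K X) :
    toAssocQ K ((assosymIdeal K X).mkQ x) = toAssocHom K X x := rfl

lemma map_foldl_mul {M N F : Type*} [Mul M] [Mul N] [FunLike F M N] [MulHomClass F M N]
    (f : F) (a : M) (l : List M) :
    f (l.foldl (· * ·) a) = (l.map f).foldl (· * ·) (f a) := by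
  induction l generalizing a with
  | nil => rfl
  | cons x xs ih => simp only [List.foldl_cons, List.map_cons, ih, map_mul]

lemma map_leftNormed {A B : Type*} [NonUnitalNonAssocRing A] [NonUnitalNonAssocRing B]
    {F : Type*} [FunLike F A B] [MulHomClass F A B] [AddMonoidHomClass F A B]
    (f : F) (l : List A) : f (leftNormed l) = leftNormed (l.map f) := by
  cases l with
  | nil => simpa [leftNormed] using map_zero f
  | cons x xs => simpa [leftNormed] using map_foldl_mul f x xs

lemma foldl_single {M : Type*} [Mul M] (a : M) (l : List M) :
    (l.map fun m => (MonoidAlgebra.single m (1 : K) : MonoidAlgebra K M)).foldl (· * ·)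
      (MonoidAlgebra.single a 1) = MonoidAlgebra.single (l.foldl (· * ·) a) 1 := by
  induction l generalizing a with
  | nil => rfl
  | cons x xs ih =>
      simp only [List.map_cons, List.foldl_cons, MonoidAlgebra.single_mul_single, one_mul, ih]

lemma foldl_ofList {α : Type*} (a : FreeMonoid α) (l : List α) :
    (l.map FreeMonoid.of).foldl (· * ·) a = a * FreeMonoid.ofList l := by
  induction l generalizing a with
  | nil => exact (mul_one a).symm
  | cons x xs ih =>
      rw [List.map_cons, List.foldl_cons, ih, FreeMonoid.ofList_cons, ← mul_assoc]

lemma toAssocHom_of (j : X) :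
    toAssocHom K X (FreeNonUnitalNonAssocAlgebra.of K j) =
      MonoidAlgebra.single (FreeMonoid.of j) 1 := by
  show MonoidAlgebra.mapDomain (FreeMagma.lift (FreeMonoid.of : X → FreeMonoid X))
      (MonoidAlgebra.single (FreeMagma.of j) 1) = _
  rw [MonoidAlgebra.mapDomain_single, FreeMagma.lift_of]

lemma toAssocHom_leftNormed (x : X) (xs : List X) :
    toAssocHom K X (leftNormed ((x :: xs).map fun i => FreeNonUnitalNonAssocAlgebra.of K i)) =
      MonoidAlgebra.single (FreeMonoid.ofList (x :: xs)) 1 := by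
  rw [map_leftNormed, List.map_cons, List.map_cons, leftNormed, List.map_map]
  have h1 : (xs.map ((toAssocHom K X) ∘ fun i => FreeNonUnitalNonAssocAlgebra.of K i))
      = (xs.map FreeMonoid.of).map fun m =>
          (MonoidAlgebra.single m (1 : K) : MonoidAlgebra K (FreeMonoid X)) := by
    simp [Function.comp, toAssocHom_of]
  rw [h1, toAssocHom_of, foldl_single, foldl_ofList, FreeMonoid.ofList_cons]

variable {n : ℕ}

lemma toAssocHom_lnMono (hn : 1 ≤ n) (σ : Equiv.Perm (Fin n)) :
    toAssocHom K (Fin n) (lnMono K σ) =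
      MonoidAlgebra.single (FreeMonoid.ofList ((List.finRange n).map σ)) 1 := by
  obtain ⟨x, xs, hx⟩ : ∃ x xs, (List.finRange n).map ⇑σ = x :: xs := by
    cases h : (List.finRange n).map ⇑σ with
    | nil => exact absurd (by simpa using congrArg List.length h) (by omega)
    | cons x xs => exact ⟨x, xs, rfl⟩
  have : lnMono K σ =
      leftNormed (((List.finRange n).map ⇑σ).map
        fun i => FreeNonUnitalNonAssocAlgebra.of K i) := by
    rw [lnMono, List.map_map]; rfl
  rw [this, hx, toAssocHom_leftNormed]

lemma finRange_map_inj {α : Type*} {f g : Fin n → α}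
    (h : (List.finRange n).map f = (List.finRange n).map g) : f = g := by
  funext i
  have hi : (i : ℕ) < ((List.finRange n).map f).length := by simpa using i.2
  have hi' : (i : ℕ) < ((List.finRange n).map g).length := by simpa using i.2
  have h3 : ((List.finRange n).map f)[(i : ℕ)]'hi = ((List.finRange n).map g)[(i : ℕ)]'hi' := by
    simp only [h]
  simpa using h3

/-- The word of a permutation, as an element of the free monoid. -/
def permWord (σ : Equiv.Perm (Fin n)) : FreeMonoid (Fin n) :=
  FreeMonoid.ofList ((List.finRange n).map σ)

lemma permWord_injective : Function.Injective (permWord (n := n)) := by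
  intro σ τ h
  have := finRange_map_inj (FreeMonoid.ofList.injective h)
  exact Equiv.Perm.ext fun i => congrFun this i

lemma lnMono_linearIndependent (hn : 1 ≤ n) :
    LinearIndependent K
      (fun σ : Equiv.Perm (Fin n) => (assosymIdeal K (Fin n)).mkQ (lnMono K σ)) := by
  apply LinearIndependent.of_comp (toAssocQ K)
  have h1 : ((toAssocQ K) ∘ fun σ : Equiv.Perm (Fin n) =>
      (assosymIdeal K (Fin n)).mkQ (lnMono K σ)) =
      fun σ : Equiv.Perm (Fin n) =>
        (MonoidAlgebra.single (permWord σ) 1 : MonoidAlgebra K (FreeMonoid (Fin n))) := by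
    funext σ
    simp only [Function.comp_apply, toAssocQ_mkQ, toAssocHom_lnMono K hn, permWord]
  rw [h1]
  have := (MonoidAlgebra.basis (FreeMonoid (Fin n)) K).linearIndependent.comp permWord
    permWord_injective
  simpa [Function.comp_def, MonoidAlgebra.basis_apply] using this

lemma relabel_of (ρ : Equiv.Perm (Fin n)) (j : Fin n) :
    relabel K ρ (FreeNonUnitalNonAssocAlgebra.of K j) =
      FreeNonUnitalNonAssocAlgebra.of K (ρ j) := by
  show MonoidAlgebra.mapDomain (FreeMagma.map (⇑ρ)) (MonoidAlgebra.single (FreeMagma.of j) 1) = _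
  rw [MonoidAlgebra.mapDomain_single, FreeMagma.map_of]
  rfl

lemma relabel_lnMono (ρ τ : Equiv.Perm (Fin n)) :
    relabel K ρ (lnMono K τ) = lnMono K (ρ * τ) := by
  rw [lnMono, map_leftNormed, List.map_map, lnMono]
  congr 1
  refine List.map_congr_left fun i _ => ?_
  simp [Function.comp, relabel_of, Equiv.Perm.mul_apply]

lemma permAct_mkQ_lnMono (ρ τ : Equiv.Perm (Fin n)) :
    permAct K ρ ((assosymIdeal K (Fin n)).mkQ (lnMono K τ)) =
      (assosymIdeal K (Fin n)).mkQ (lnMono K (ρ * τ)) := by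
  have h : permAct K ρ ((assosymIdeal K (Fin n)).mkQ (lnMono K τ)) =
      (assosymIdeal K (Fin n)).mkQ (relabelₗ K ρ (lnMono K τ)) :=
    Submodule.mapQ_apply (assosymIdeal K (Fin n)) (assosymIdeal K (Fin n)) (relabelₗ K ρ)
      (lnMono K τ)
  rw [h]
  exact congrArg _ (relabel_lnMono K ρ τ)

end AuxProof

/-- The `n!` left-normed multilinear monomials are linearly independent in the multilinear
part of the free assosymmetric algebra, the symmetric group acts simply transitively on
them, and consequently their span `K·T_n` is isomorphic, as a module over the group algebra
`K[S_n]`, to the left regular module `K[S_n]`: there is a `K`-linear equivalence from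
`K[S_n]` to `K·T_n` intertwining left multiplication with the variable-permuting action. -/
theorem span_Tn_regular_module (K : Type*) [Field K] [CharZero K] (n : ℕ) (hn : 1 ≤ n) :
    LinearIndependent K
      (fun σ : Equiv.Perm (Fin n) => (assosymIdeal K (Fin n)).mkQ (lnMono K σ)) ∧
    (∀ t₁ ∈ TnSet K n, ∀ t₂ ∈ TnSet K n, ∃! σ : Equiv.Perm (Fin n), permAct K σ t₁ = t₂) ∧
    ∃ e : MonoidAlgebra K (Equiv.Perm (Fin n)) ≃ₗ[K] Submodule.span K (TnSet K n),
      ∀ (ρ : Equiv.Perm (Fin n)) (x : MonoidAlgebra K (Equiv.Perm (Fin n))),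
        ((e (MonoidAlgebra.single ρ 1 * x) : FreeAssosym K (Fin n))) =
          permAct K ρ (e x : FreeAssosym K (Fin n)) := by
  classical
  have hli := lnMono_linearIndependent K (n := n) hn
  have hinj : Function.Injective
      (fun σ : Equiv.Perm (Fin n) => (assosymIdeal K (Fin n)).mkQ (lnMono K σ)) :=
    hli.injective
  refine ⟨hli, ?_, ?_⟩
  · rintro t₁ ⟨τ₁, rfl⟩ t₂ ⟨τ₂, rfl⟩
    refine ⟨τ₂ * τ₁⁻¹, ?_, ?_⟩
    · show permAct K (τ₂ * τ₁⁻¹) ((assosymIdeal K (Fin n)).mkQ (lnMono K τ₁)) =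
        (assosymIdeal K (Fin n)).mkQ (lnMono K τ₂)
      rw [permAct_mkQ_lnMono]
      congr 2
      group
    · intro σ hσ
      have hσ' : permAct K σ ((assosymIdeal K (Fin n)).mkQ (lnMono K τ₁)) =
          (assosymIdeal K (Fin n)).mkQ (lnMono K τ₂) := hσ
      rw [permAct_mkQ_lnMono] at hσ'
      have h2 : σ * τ₁ = τ₂ := hinj hσ'
      rw [← h2]
      group
  · refine ⟨(MonoidAlgebra.coeffLinearEquiv K).trans hli.linearCombinationEquiv, fun ρ x => ?_⟩
    show Finsupp.linearCombination K
        (fun σ : Equiv.Perm (Fin n) => (assosymIdeal K (Fin n)).mkQ (lnMono K σ))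
        (MonoidAlgebra.single ρ (1 : K) * x).coeff =
      permAct K ρ (Finsupp.linearCombination K
        (fun σ : Equiv.Perm (Fin n) => (assosymIdeal K (Fin n)).mkQ (lnMono K σ)) x.coeff)
    induction x using MonoidAlgebra.induction_linear with
    | zero => simp
    | add a b ha hb => rw [mul_add, MonoidAlgebra.coeff_add, map_add, ha, hb, MonoidAlgebra.coeff_add, map_add, map_add]
    | single τ c =>
        rw [MonoidAlgebra.single_mul_single, one_mul]
        show Finsupp.linearCombination K _ (Finsupp.single (ρ * τ) c) =
          permAct K ρ (Finsupp.linearCombination K _ (Finsupp.single τ c))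
        rw [Finsupp.linearCombination_single, Finsupp.linearCombination_single, map_smul]
        congr 1
        exact (permAct_mkQ_lnMono K ρ τ).symm

end
end

section
/- Let K be a field of characteristic 0, n ≥ 3 and 0 ≤ k ≤ n−3. The set T_{k,n−k} ⊆ P_n has exactly binom(n, k) elements and these elements are linearly independent over K; hence the span K·T_{k,n−k} has dimension binom(n, k). -/
noncomputable section

namespace AssosymAux

open MvPolynomial

variable (K : Type*) [Field K] (n : ℕ)

abbrev RR := MvPolynomial (Fin n) K

def epsl : RR K n →+* K := (MvPolynomial.eval (fun _ => (1:K)))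

@[simp] lemma epsl_C (c : K) : epsl K n (C c) = c := by simp [epsl]
@[simp] lemma epsl_X (i : Fin n) : epsl K n (X i) = 1 := by simp [epsl]

def AA := RR K n × RR K n

instance : AddCommGroup (AA K n) := inferInstanceAs (AddCommGroup (_ × _))
instance : Module K (AA K n) := inferInstanceAs (Module K (_ × _))

def aamul (x y : AA K n) : AA K n :=
  (x.1 * y.1,
   x.1 * y.2 + C (epsl K n y.1) * x.2 + C (epsl K n x.1) * y.1
     - C (epsl K n x.1 * epsl K n y.1) - x.1 * y.1)

instance : Mul (AA K n) := ⟨aamul K n⟩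

/-- Constructor for `AA`. -/
def AA.mk (p q : RR K n) : AA K n := (p, q)

@[simp] lemma AA.mk_fst (p q : RR K n) : (AA.mk K n p q).1 = p := rfl
@[simp] lemma AA.mk_snd (p q : RR K n) : (AA.mk K n p q).2 = q := rfl
@[simp] lemma AA.mk_zero : AA.mk K n 0 0 = 0 := rfl

@[simp] lemma AA.fst_add (x y : AA K n) : (x+y).1 = x.1 + y.1 := rfl
@[simp] lemma AA.snd_add (x y : AA K n) : (x+y).2 = x.2 + y.2 := rfl
@[simp] lemma AA.fst_sub (x y : AA K n) : (x-y).1 = x.1 - y.1 := rfl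
@[simp] lemma AA.snd_sub (x y : AA K n) : (x-y).2 = x.2 - y.2 := rfl
@[simp] lemma AA.fst_neg (x : AA K n) : (-x).1 = -x.1 := rfl
@[simp] lemma AA.snd_neg (x : AA K n) : (-x).2 = -x.2 := rfl
@[simp] lemma AA.fst_zero : (0 : AA K n).1 = 0 := rfl
@[simp] lemma AA.snd_zero : (0 : AA K n).2 = 0 := rfl
@[simp] lemma AA.fst_smul (c : K) (x : AA K n) : (c • x).1 = c • x.1 := rfl
@[simp] lemma AA.snd_smul (c : K) (x : AA K n) : (c • x).2 = c • x.2 := rfl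
@[simp] lemma AA.fst_mul (x y : AA K n) : (x*y).1 = x.1 * y.1 := rfl
lemma AA.snd_mul (x y : AA K n) : (x*y).2 = x.1 * y.2 + C (epsl K n y.1) * x.2 + C (epsl K n x.1) * y.1 - C (epsl K n x.1 * epsl K n y.1) - x.1 * y.1 := rfl
@[simp] lemma AA.ext_iff' (x y : AA K n) : x = y ↔ x.1 = y.1 ∧ x.2 = y.2 := Prod.ext_iff

instance : NonUnitalNonAssocRing (AA K n) where
  left_distrib x y z := by
    simp only [AA.ext_iff', AA.fst_add, AA.snd_add, AA.fst_mul, AA.snd_mul, map_add, map_mul, C_add, C_mul]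
    constructor <;> ring
  right_distrib x y z := by
    simp only [AA.ext_iff', AA.fst_add, AA.snd_add, AA.fst_mul, AA.snd_mul, map_add, map_mul, C_add, C_mul]
    constructor <;> ring
  zero_mul x := by
    simp only [AA.ext_iff', AA.fst_zero, AA.snd_zero, AA.fst_mul, AA.snd_mul, map_zero, C_0, zero_mul, mul_zero]
    constructor <;> simp
  mul_zero x := by
    simp only [AA.ext_iff', AA.fst_zero, AA.snd_zero, AA.fst_mul, AA.snd_mul, map_zero, C_0, zero_mul, mul_zero]
    constructor <;> simp

instance : IsScalarTower K (AA K n) (AA K n) := ⟨by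
  intro c x y
  simp only [AA.ext_iff', AA.fst_mul, AA.snd_mul, AA.fst_smul, AA.snd_smul, map_smul, map_mul,
    smul_eq_mul, C_mul, MvPolynomial.smul_eq_C_mul, epsl_C]
  constructor <;> ring⟩

instance : SMulCommClass K (AA K n) (AA K n) := ⟨by
  intro c x y
  simp only [AA.ext_iff', AA.fst_mul, AA.snd_mul, AA.fst_smul, AA.snd_smul, map_smul, map_mul,
    smul_eq_mul, C_mul, MvPolynomial.smul_eq_C_mul, epsl_C]
  constructor <;> ring⟩

lemma AA.assosym₁ (x y z : AA K n) : assoc' x y z = assoc' x z y := by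
  simp only [assoc', AA.ext_iff', AA.fst_sub, AA.snd_sub, AA.fst_mul, AA.snd_mul, map_mul,
    map_add, map_sub, C_mul, C_add, C_sub, epsl_C]
  constructor <;> ring

lemma AA.assosym₂ (x y z : AA K n) : assoc' x y z = assoc' y x z := by
  simp only [assoc', AA.ext_iff', AA.fst_sub, AA.snd_sub, AA.fst_mul, AA.snd_mul, map_mul,
    map_add, map_sub, C_mul, C_add, C_sub, epsl_C]
  constructor <;> ring

/-- The evaluation map `φ` to the concrete assosymmetric algebra. -/
def phi : FreeNonUnitalNonAssocAlgebra K (Fin n) →ₙₐ[K] AA K n :=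
  FreeNonUnitalNonAssocAlgebra.lift K (fun i => AA.mk K n (X i) 0)

@[simp] lemma phi_of (i : Fin n) :
    phi K n (FreeNonUnitalNonAssocAlgebra.of K i) = AA.mk K n (X i) 0 :=
  FreeNonUnitalNonAssocAlgebra.lift_of_apply K _ i

lemma phi_rel {x : FreeNonUnitalNonAssocAlgebra K (Fin n)}
    (hx : IsAssosymRel K (Fin n) x) : phi K n x = 0 := by
  induction hx with
  | rel₁ a b c =>
      rw [map_sub]
      have : phi K n (assoc' a b c) = phi K n (assoc' a c b) := by
        simp only [assoc', map_sub, map_mul]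
        exact AA.assosym₁ K n _ _ _
      rw [this, sub_self]
  | rel₂ a b c =>
      rw [map_sub]
      have : phi K n (assoc' a b c) = phi K n (assoc' b a c) := by
        simp only [assoc', map_sub, map_mul]
        exact AA.assosym₂ K n _ _ _
      rw [this, sub_self]
  | mul_left r x _ ih => rw [map_mul, ih, mul_zero]
  | mul_right r x _ ih => rw [map_mul, ih, zero_mul]

/-- `φ` descends to the free assosymmetric algebra. -/
def Phi : FreeAssosym K (Fin n) →ₗ[K] AA K n :=
  Submodule.liftQ _ (phi K n : FreeNonUnitalNonAssocAlgebra K (Fin n) →ₗ[K] AA K n) (by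
    rw [assosymIdeal, Submodule.span_le]
    intro x hx
    exact phi_rel K n hx)

@[simp] lemma Phi_mkQ (x : FreeNonUnitalNonAssocAlgebra K (Fin n)) :
    Phi K n ((assosymIdeal K (Fin n)).mkQ x) = phi K n x := rfl

end AssosymAux

namespace AssosymAux

open MvPolynomial

variable (K : Type*) [Field K] (n : ℕ)

lemma map_foldl_brk {B C : Type*} [NonUnitalNonAssocRing B] [NonUnitalNonAssocRing C]
    [Module K B] [Module K C] (F : B →ₙₐ[K] C) (l : List B) (x : B) :
    F (l.foldl brk x) = (l.map F).foldl brk (F x) := by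
  induction l generalizing x with
  | nil => rfl
  | cons a l ih =>
      simp only [List.foldl_cons, List.map_cons, ih]
      congr 1
      simp [brk, map_sub, map_mul]

lemma map_nestedBrk {B C : Type*} [NonUnitalNonAssocRing B] [NonUnitalNonAssocRing C]
    [Module K B] [Module K C] (F : B →ₙₐ[K] C) (l : List B) :
    F (nestedBrk l) = nestedBrk (l.map F) := by
  match l with
  | [] => simp [nestedBrk]
  | [a] => simp [nestedBrk]
  | [a, b] => simp [nestedBrk]
  | a :: b :: c :: rest =>
      simp only [nestedBrk, List.map_cons]
      rw [map_foldl_brk K F]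
      congr 1
      simp [assoc', map_sub, map_mul]

lemma map_foldr_mul {B C : Type*} [NonUnitalNonAssocRing B] [NonUnitalNonAssocRing C]
    [Module K B] [Module K C] (F : B →ₙₐ[K] C) (l : List B) (x : B) :
    F (l.foldr (· * ·) x) = (l.map F).foldr (· * ·) (F x) := by
  induction l with
  | nil => rfl
  | cons a l ih => simp [List.foldr_cons, map_mul, ih]

lemma AA.foldl_brk (m : RR K n) (l : List (Fin n)) :
    (l.map fun j => AA.mk K n (X j) 0).foldl brk (AA.mk K n 0 m) =
      AA.mk K n 0 ((l.map fun j => (1 - X j : RR K n)).prod * m) := by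
  induction l generalizing m with
  | nil => simp
  | cons a l ih =>
      simp only [List.map_cons, List.foldl_cons]
      have hbrk : brk (AA.mk K n 0 m) (AA.mk K n (X a) 0) = AA.mk K n 0 ((1 - X a) * m) := by
        simp only [brk, AA.ext_iff', AA.fst_sub, AA.snd_sub, AA.fst_mul, AA.snd_mul, AA.mk_fst,
          AA.mk_snd, map_zero, map_mul, epsl_X, C_0, C_1]
        constructor <;> ring
      rw [hbrk, ih]
      simp only [AA.ext_iff', AA.mk_fst, AA.mk_snd, List.prod_cons]
      refine ⟨by simp, by ring⟩

lemma AA.foldr_mul (m : RR K n) (l : List (Fin n)) :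
    (l.map fun j => AA.mk K n (X j) 0).foldr (· * ·) (AA.mk K n 0 m) =
      AA.mk K n 0 ((l.map fun j => (X j : RR K n)).prod * m) := by
  induction l with
  | nil => simp
  | cons a l ih =>
      simp only [List.map_cons, List.foldr_cons, ih]
      simp only [AA.ext_iff', AA.fst_mul, AA.snd_mul, AA.mk_fst, AA.mk_snd, map_zero, epsl_X,
        C_0, C_1, List.prod_cons, mul_zero, zero_mul, one_mul, mul_one]
      refine ⟨by simp, by ring⟩

lemma AA.assoc_X (a b c : Fin n) :
    assoc' (AA.mk K n (X a) 0) (AA.mk K n (X b) 0) (AA.mk K n (X c) 0) =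
      AA.mk K n 0 ((X a - 1) * (X b - 1) * (X c - 1)) := by
  simp only [assoc', AA.ext_iff', AA.fst_sub, AA.snd_sub, AA.fst_mul, AA.snd_mul, AA.mk_fst,
    AA.mk_snd, map_mul, epsl_X, C_1]
  constructor <;> ring

/-- The inner polynomial attached to the tail list. -/
def QQ : List (Fin n) → RR K n
  | a :: b :: c :: rest =>
      ((rest.map fun j => (1 - X j : RR K n)).prod) * ((X a - 1) * (X b - 1) * (X c - 1))
  | _ => 0

lemma AA.nestedBrk_X (l : List (Fin n)) :
    nestedBrk (l.map fun j => AA.mk K n (X j) 0) = AA.mk K n 0 (QQ K n l) := by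
  match l with
  | [] => simp [nestedBrk, QQ]
  | [a] => simp [nestedBrk, QQ]
  | [a, b] => simp [nestedBrk, QQ]
  | a :: b :: c :: rest =>
      simp only [List.map_cons, nestedBrk, QQ]
      rw [AA.assoc_X, AA.foldl_brk]

/-- The polynomial image of `mono₂ σ k` under `φ`. -/
def PP (σ : Equiv.Perm (Fin n)) (k : ℕ) : RR K n :=
  ((((List.finRange n).take k).map fun i => (X (σ i) : RR K n)).prod) *
    QQ K n (((List.finRange n).drop k).map σ)

lemma phi_mono₂ (σ : Equiv.Perm (Fin n)) (k : ℕ) :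
    phi K n (mono₂ K σ k) = AA.mk K n 0 (PP K n σ k) := by
  unfold mono₂
  rw [map_foldr_mul K, map_nestedBrk K]
  simp only [List.map_map]
  have h1 : ((List.finRange n).drop k).map ((phi K n) ∘ fun i =>
      FreeNonUnitalNonAssocAlgebra.of K (σ i)) =
      (((List.finRange n).drop k).map σ).map fun j => AA.mk K n (X j) 0 := by
    simp [List.map_map, Function.comp_def]
  have h2 : ((List.finRange n).take k).map ((phi K n) ∘ fun i =>
      FreeNonUnitalNonAssocAlgebra.of K (σ i)) =
      (((List.finRange n).take k).map σ).map fun j => AA.mk K n (X j) 0 := by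
    simp [List.map_map, Function.comp_def]
  rw [h1, AA.nestedBrk_X, h2, AA.foldr_mul]
  simp only [PP, List.map_map, Function.comp_def]

end AssosymAux

namespace AssosymAux

open MvPolynomial

variable (K : Type*) [Field K] (n : ℕ)

lemma mem_take_finRange (k : ℕ) (i : Fin n) :
    i ∈ (List.finRange n).take k ↔ (i : ℕ) < k := by
  rw [List.mem_take_iff_getElem]
  constructor
  · rintro ⟨j, hj, rfl⟩
    simp only [List.getElem_finRange, Fin.cast_mk]
    simp only [List.length_finRange] at hj
    omega
  · intro h
    refine ⟨(i : ℕ), by simp [List.length_finRange]; omega, ?_⟩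
    simp [List.getElem_finRange]

lemma mem_drop_finRange (k : ℕ) (i : Fin n) :
    i ∈ (List.finRange n).drop k ↔ k ≤ (i : ℕ) := by
  rw [List.mem_drop_iff_getElem]
  constructor
  · rintro ⟨j, hj, rfl⟩
    simp only [List.getElem_finRange, Fin.cast_mk]
    omega
  · intro h
    have hi : (i : ℕ) - k + k < (List.finRange n).length := by
      simp [List.length_finRange]; omega
    refine ⟨(i : ℕ) - k, hi, ?_⟩
    simp only [List.getElem_finRange, Fin.cast_mk]
    ext
    simp
    omega

end AssosymAux

namespace AssosymAux

open MvPolynomial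

variable (K : Type*) [Field K] (n : ℕ)

/-- Evaluation at the characteristic vector of the subset `T`. -/
def evA (T : Finset (Fin n)) : RR K n →ₐ[K] K :=
  aeval (fun i => if i ∈ T then (1 : K) else 0)

@[simp] lemma evA_X (T : Finset (Fin n)) (i : Fin n) :
    evA K n T (X i) = if i ∈ T then (1 : K) else 0 := by simp [evA]

/-- The head subset attached to a permutation. -/
def Ssig (σ : Equiv.Perm (Fin n)) (k : ℕ) : Finset (Fin n) :=
  (((List.finRange n).take k).map σ).toFinset

lemma mem_Ssig (σ : Equiv.Perm (Fin n)) (k : ℕ) (x : Fin n) :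
    x ∈ Ssig n σ k ↔ ((σ.symm x : Fin n) : ℕ) < k := by
  simp only [Ssig, List.mem_toFinset, List.mem_map]
  constructor
  · rintro ⟨i, hi, rfl⟩
    rw [mem_take_finRange] at hi
    simpa using hi
  · intro h
    exact ⟨σ.symm x, (mem_take_finRange n k _).2 h, by simp⟩

lemma card_Ssig (σ : Equiv.Perm (Fin n)) (k : ℕ) (hkn : k ≤ n) :
    (Ssig n σ k).card = k := by
  rw [Ssig, List.toFinset_card_of_nodup
    (List.Nodup.map σ.injective ((List.take_sublist _ _).nodup (List.nodup_finRange n)))]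
  simp [List.length_take, hkn]

lemma evA_QQ (T : Finset (Fin n)) (l : List (Fin n)) (h3 : 3 ≤ l.length)
    (hT : ∀ j ∈ l, j ∉ T) : evA K n T (QQ K n l) = -1 := by
  match l with
  | a :: b :: c :: rest =>
      have ha : a ∉ T := hT a (by simp)
      have hb : b ∉ T := hT b (by simp)
      have hc : c ∉ T := hT c (by simp)
      simp only [QQ, map_mul, map_sub, map_one, map_list_prod, List.map_map]
      have hrest : ((rest.map fun j => (1 - X j : RR K n)).map (evA K n T)).prod = 1 := by
        rw [List.map_map]
        apply List.prod_eq_one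
        intro x hx
        simp only [List.mem_map, Function.comp_def] at hx
        obtain ⟨i, hi, rfl⟩ := hx
        have : i ∉ T := hT i (by simp [hi])
        simp [this]
      rw [List.map_map] at hrest
      simp only [Function.comp_def, map_sub, map_one] at hrest ⊢
      rw [hrest]
      simp [ha, hb, hc]

lemma evA_PP_zero (σ : Equiv.Perm (Fin n)) (k : ℕ) (T : Finset (Fin n))
    (hx : ∃ x ∈ Ssig n σ k, x ∉ T) : evA K n T (PP K n σ k) = 0 := by
  obtain ⟨x, hxS, hxT⟩ := hx
  rw [mem_Ssig] at hxS
  rw [PP, map_mul]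
  have : evA K n T ((((List.finRange n).take k).map fun i => (X (σ i) : RR K n)).prod) = 0 := by
    rw [map_list_prod]
    apply List.prod_eq_zero
    simp only [List.map_map, List.mem_map, Function.comp_def]
    refine ⟨σ.symm x, (mem_take_finRange n k _).2 hxS, ?_⟩
    simp [hxT]
  rw [this, zero_mul]

lemma evA_PP_self (σ : Equiv.Perm (Fin n)) (k : ℕ) (hkn : k + 3 ≤ n) :
    evA K n (Ssig n σ k) (PP K n σ k) = -1 := by
  rw [PP, map_mul]
  have h1 : evA K n (Ssig n σ k)
      ((((List.finRange n).take k).map fun i => (X (σ i) : RR K n)).prod) = 1 := by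
    rw [map_list_prod]
    apply List.prod_eq_one
    intro x hx
    simp only [List.map_map, List.mem_map, Function.comp_def] at hx
    obtain ⟨i, hi, rfl⟩ := hx
    have : σ i ∈ Ssig n σ k := by
      rw [mem_Ssig]
      simpa using (mem_take_finRange n k i).1 hi
    simp [this]
  have h2 : evA K n (Ssig n σ k) (QQ K n (((List.finRange n).drop k).map σ)) = -1 := by
    apply evA_QQ
    · simp only [List.length_map, List.length_drop, List.length_finRange]
      omega
    · intro j hj
      simp only [List.mem_map] at hj
      obtain ⟨i, hi, rfl⟩ := hj
      rw [mem_drop_finRange] at hi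
      rw [mem_Ssig]
      simp
      omega
  rw [h1, h2, one_mul]

end AssosymAux

namespace AssosymAux

variable {n k : ℕ}

/-- The standard permutation attached to a `k`-subset `S`: enumerate `S` increasingly on the
first `k` indices, and `Sᶜ` increasingly on the remaining ones. -/
def sigmaFun (S : Finset (Fin n)) (hS : S.card = k) (hkn : k ≤ n) : Fin n → Fin n := fun i =>
  if h : (i : ℕ) < k then S.orderEmbOfFin hS ⟨(i : ℕ), h⟩
  else Sᶜ.orderEmbOfFin (k := n - k) (by simp [Finset.card_compl, hS]) ⟨(i : ℕ) - k, by
    have := i.2; omega⟩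

lemma sigmaFun_injective (S : Finset (Fin n)) (hS : S.card = k) (hkn : k ≤ n) :
    Function.Injective (sigmaFun S hS hkn) := by
  intro i j hij
  unfold sigmaFun at hij
  by_cases hi : (i : ℕ) < k <;> by_cases hj : (j : ℕ) < k
  · rw [dif_pos hi, dif_pos hj] at hij
    have := (S.orderEmbOfFin hS).injective hij
    have := congrArg Fin.val this
    exact Fin.ext (by simpa using this)
  · rw [dif_pos hi, dif_neg hj] at hij
    have h1 := Finset.orderEmbOfFin_mem S hS ⟨(i : ℕ), hi⟩
    rw [hij] at h1
    have h2 := Finset.orderEmbOfFin_mem Sᶜ (by simp [Finset.card_compl, hS])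
      (⟨(j : ℕ) - k, by have := j.2; omega⟩ : Fin (n - k))
    exact absurd h1 (Finset.mem_compl.1 h2)
  · rw [dif_neg hi, dif_pos hj] at hij
    have h1 := Finset.orderEmbOfFin_mem S hS ⟨(j : ℕ), hj⟩
    rw [← hij] at h1
    have h2 := Finset.orderEmbOfFin_mem Sᶜ (by simp [Finset.card_compl, hS])
      (⟨(i : ℕ) - k, by have := i.2; omega⟩ : Fin (n - k))
    exact absurd h1 (Finset.mem_compl.1 h2)
  · rw [dif_neg hi, dif_neg hj] at hij
    have := (Sᶜ.orderEmbOfFin (k := n - k) (by simp [Finset.card_compl, hS])).injective hij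
    have := congrArg Fin.val this
    simp only [Fin.val_mk] at this
    exact Fin.ext (by omega)

def sigmaPerm (S : Finset (Fin n)) (hS : S.card = k) (hkn : k ≤ n) : Equiv.Perm (Fin n) :=
  Equiv.ofBijective _ (Finite.injective_iff_bijective.1 (sigmaFun_injective S hS hkn))

lemma sigmaPerm_head (S : Finset (Fin n)) (hS : S.card = k) (hkn : k ≤ n) (i : Fin n)
    (h : (i : ℕ) < k) : sigmaPerm S hS hkn i = S.orderEmbOfFin hS ⟨(i : ℕ), h⟩ := dif_pos h

lemma sigmaPerm_tail (S : Finset (Fin n)) (hS : S.card = k) (hkn : k ≤ n) (i : Fin n)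
    (h : ¬ (i : ℕ) < k) : sigmaPerm S hS hkn i =
      Sᶜ.orderEmbOfFin (k := n - k) (by simp [Finset.card_compl, hS]) ⟨(i : ℕ) - k, by
        have := i.2; omega⟩ := dif_neg h

lemma sigmaPerm_strictMonoOn_head (S : Finset (Fin n)) (hS : S.card = k) (hkn : k ≤ n) :
    StrictMonoOn (⇑(sigmaPerm S hS hkn)) {i : Fin n | (i : ℕ) < k} := by
  intro i hi j hj hij
  rw [sigmaPerm_head S hS hkn i hi, sigmaPerm_head S hS hkn j hj]
  exact (S.orderEmbOfFin hS).strictMono (Fin.mk_lt_mk.2 hij)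

lemma sigmaPerm_strictMonoOn_tail (S : Finset (Fin n)) (hS : S.card = k) (hkn : k ≤ n) :
    StrictMonoOn (⇑(sigmaPerm S hS hkn)) {i : Fin n | k ≤ (i : ℕ)} := by
  intro i hi j hj hij
  have hi' : ¬ (i : ℕ) < k := by simpa using hi
  have hj' : ¬ (j : ℕ) < k := by simpa using hj
  rw [sigmaPerm_tail S hS hkn i hi', sigmaPerm_tail S hS hkn j hj']
  refine (Sᶜ.orderEmbOfFin _).strictMono ?_
  have : (i : ℕ) < (j : ℕ) := hij
  simp only [Fin.mk_lt_mk]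
  omega

lemma mem_Ssig' (σ : Equiv.Perm (Fin n)) (i : Fin n) :
    σ i ∈ Ssig n σ k ↔ (i : ℕ) < k := by
  rw [mem_Ssig]
  simp

lemma Ssig_sigmaPerm (S : Finset (Fin n)) (hS : S.card = k) (hkn : k ≤ n) :
    Ssig n (sigmaPerm S hS hkn) k = S := by
  apply Finset.eq_of_subset_of_card_le
  · intro x hx
    simp only [Ssig, List.mem_toFinset, List.mem_map] at hx
    obtain ⟨i, hi, rfl⟩ := hx
    have h : (i : ℕ) < k := (mem_take_finRange n k i).1 hi
    rw [sigmaPerm_head S hS hkn i h]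
    exact Finset.orderEmbOfFin_mem S hS _
  · rw [hS, card_Ssig n _ _ hkn]

/-- Uniqueness: any admissible permutation is the standard one for its head subset. -/
lemma sigma_eq_sigmaPerm (σ : Equiv.Perm (Fin n))
    (h1 : StrictMonoOn (⇑σ) {i : Fin n | (i : ℕ) < k})
    (h2 : StrictMonoOn (⇑σ) {i : Fin n | k ≤ (i : ℕ)}) (hkn : k ≤ n) :
    σ = sigmaPerm (Ssig n σ k) (card_Ssig n σ k hkn) hkn := by
  set S : Finset (Fin n) := Ssig n σ k with hSdef
  have hS : S.card = k := card_Ssig n σ k hkn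
  -- head
  have hf : (fun j : Fin k => σ ⟨(j : ℕ), lt_of_lt_of_le j.2 hkn⟩) = ⇑(S.orderEmbOfFin hS) := by
    apply Finset.orderEmbOfFin_unique hS
    · intro x
      exact (mem_Ssig' σ _).2 x.2
    · intro a b hab
      exact h1 (by simpa using a.2) (by simpa using b.2) (Fin.mk_lt_mk.2 hab)
  have hcompl : Sᶜ.card = n - k := by simp [Finset.card_compl, hS]
  have hg : (fun j : Fin (n - k) => σ ⟨k + (j : ℕ), by have := j.2; omega⟩) =
      ⇑(Sᶜ.orderEmbOfFin hcompl) := by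
    apply Finset.orderEmbOfFin_unique hcompl
    · intro x
      simp only [Finset.mem_compl, hSdef, mem_Ssig' σ]
      omega
    · intro a b hab
      exact h2 (by simp) (by simp) (Fin.mk_lt_mk.2 (Nat.add_lt_add_left hab k))
  refine Equiv.ext fun i => ?_
  by_cases h : (i : ℕ) < k
  · rw [sigmaPerm_head S hS hkn i h]
    have := congrFun hf ⟨(i : ℕ), h⟩
    simp only [Fin.eta] at this
    rw [← this]
  · rw [sigmaPerm_tail S hS hkn i h]
    have h2' := congrFun hg ⟨(i : ℕ) - k, by have := i.2; omega⟩
    rw [← h2']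
    refine congrArg σ (Fin.ext ?_)
    simp only [Fin.val_mk]
    omega

end AssosymAux

namespace AssosymAux

open MvPolynomial

variable (K : Type*) [Field K] (n : ℕ)

/-- Second component, as a linear map. -/
def sndLin : AA K n →ₗ[K] RR K n where
  toFun x := x.2
  map_add' x y := rfl
  map_smul' c x := rfl

lemma linearIndependent_of_eval {ι : Type*} (v : ι → RR K n) (S : ι → Finset (Fin n))
    (hS : Function.Injective S)
    (h0 : ∀ i j, S i ≠ S j → evA K n (S j) (v i) = 0)
    (h1 : ∀ i, evA K n (S i) (v i) ≠ 0) :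
    LinearIndependent K v := by
  rw [linearIndependent_iff']
  intro s g hsum i hi
  have h := congrArg (evA K n (S i)) hsum
  rw [map_sum, map_zero] at h
  rw [Finset.sum_eq_single i] at h
  · rw [map_smul, smul_eq_mul] at h
    rcases mul_eq_zero.1 h with h' | h'
    · exact h'
    · exact absurd h' (h1 i)
  · intro j hj hji
    rw [map_smul, h0 j i (fun hc => hji (hS hc)), smul_zero]
  · intro h'
    exact absurd hi h'

end AssosymAux

namespace AssosymAux

variable {n k : ℕ}

lemma sigmaPerm_congr {S S' : Finset (Fin n)} (h : S = S') (hS : S.card = k)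
    (hS' : S'.card = k) (hkn : k ≤ n) : sigmaPerm S hS hkn = sigmaPerm S' hS' hkn := by
  subst h; rfl

end AssosymAux


open AssosymAux

/-- For `0 ≤ k ≤ n - 3`, the set `T_{k,n-k}` has exactly `C(n, k)` elements, these elements
are linearly independent over `K`, and hence the span `K·T_{k,n-k}` has dimension `C(n, k)`. -/
theorem card_and_finrank_Tkn (K : Type*) [Field K] [CharZero K] (n k : ℕ)
    (hn : 3 ≤ n) (hk : k ≤ n - 3) :
    Nat.card (TknSet K n k) = n.choose k ∧
    LinearIndependent K (fun t : TknSet K n k => (t : FreeAssosym K (Fin n))) ∧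
    Module.finrank K (Submodule.span K (TknSet K n k)) = n.choose k := by
  classical
  have hkn3 : k + 3 ≤ n := by omega
  have hkn : k ≤ n := by omega
  -- the canonical parametrization of `TknSet` by `k`-subsets
  have FFmem : ∀ S : {S : Finset (Fin n) // S.card = k},
      (assosymIdeal K (Fin n)).mkQ (mono₂ K (sigmaPerm S.1 S.2 hkn) k) ∈ TknSet K n k :=
    fun S => ⟨sigmaPerm S.1 S.2 hkn, sigmaPerm_strictMonoOn_head S.1 S.2 hkn,
      sigmaPerm_strictMonoOn_tail S.1 S.2 hkn, rfl⟩
  set FF : {S : Finset (Fin n) // S.card = k} → TknSet K n k :=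
    fun S => ⟨(assosymIdeal K (Fin n)).mkQ (mono₂ K (sigmaPerm S.1 S.2 hkn) k), FFmem S⟩
    with hFFdef
  have hPhi : ∀ σ : Equiv.Perm (Fin n),
      sndLin K n (Phi K n ((assosymIdeal K (Fin n)).mkQ (mono₂ K σ k))) = PP K n σ k := by
    intro σ
    rw [Phi_mkQ, phi_mono₂]
    rfl
  have hval_zero : ∀ σ τ : Equiv.Perm (Fin n), Ssig n σ k ≠ Ssig n τ k →
      evA K n (Ssig n τ k) (PP K n σ k) = 0 := by
    intro σ τ hne
    apply evA_PP_zero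
    have hsub : ¬ Ssig n σ k ⊆ Ssig n τ k := fun hsub =>
      hne (Finset.eq_of_subset_of_card_le hsub
        (by rw [card_Ssig n σ k hkn, card_Ssig n τ k hkn]))
    exact Finset.not_subset.1 hsub
  have hFFinj : Function.Injective FF := by
    intro S S' hEq
    have h1 : PP K n (sigmaPerm S.1 S.2 hkn) k = PP K n (sigmaPerm S'.1 S'.2 hkn) k := by
      have h2 := congrArg (fun t : TknSet K n k => sndLin K n (Phi K n (t : FreeAssosym K (Fin n)))) hEq
      simpa only [hFFdef, hPhi] using h2
    by_contra hne
    have hSne : Ssig n (sigmaPerm S.1 S.2 hkn) k ≠ Ssig n (sigmaPerm S'.1 S'.2 hkn) k := by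
      rw [Ssig_sigmaPerm, Ssig_sigmaPerm]
      exact fun hc => hne (Subtype.ext hc)
    have hz := hval_zero _ _ hSne
    rw [h1, evA_PP_self K n _ k hkn3] at hz
    exact absurd hz (by norm_num)
  have hFFsurj : Function.Surjective FF := by
    rintro ⟨q, σ, hm1, hm2, rfl⟩
    refine ⟨⟨Ssig n σ k, card_Ssig n σ k hkn⟩, ?_⟩
    apply Subtype.ext
    show (assosymIdeal K (Fin n)).mkQ (mono₂ K (sigmaPerm (Ssig n σ k) _ hkn) k) =
      (assosymIdeal K (Fin n)).mkQ (mono₂ K σ k)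
    conv_rhs => rw [sigma_eq_sigmaPerm σ hm1 hm2 hkn]
  have hcard : Nat.card (TknSet K n k) = n.choose k := by
    rw [← Nat.card_eq_of_bijective FF ⟨hFFinj, hFFsurj⟩]
    rw [Nat.card_eq_fintype_card, Fintype.card_finset_len]
    simp
  -- linear independence
  have hind : LinearIndependent K (fun t : TknSet K n k => (t : FreeAssosym K (Fin n))) := by
    apply LinearIndependent.of_comp (sndLin K n ∘ₗ Phi K n)
    have hfun : (⇑(sndLin K n ∘ₗ Phi K n) ∘ fun t : TknSet K n k => (t : FreeAssosym K (Fin n))) =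
        fun t : TknSet K n k => PP K n t.2.choose k := by
      funext t
      have h3 := t.2.choose_spec.2.2
      show sndLin K n (Phi K n (t : FreeAssosym K (Fin n))) = _
      conv_lhs => rw [h3]
      exact hPhi _
    rw [hfun]
    apply linearIndependent_of_eval K n _ (fun t : TknSet K n k => Ssig n t.2.choose k)
    · intro t t' h
      have e1 := sigma_eq_sigmaPerm t.2.choose t.2.choose_spec.1 t.2.choose_spec.2.1 hkn
      have e2 := sigma_eq_sigmaPerm t'.2.choose t'.2.choose_spec.1 t'.2.choose_spec.2.1 hkn
      have hσ : t.2.choose = t'.2.choose := by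
        rw [e1, e2]
        exact sigmaPerm_congr h _ _ hkn
      apply Subtype.ext
      rw [t.2.choose_spec.2.2, t'.2.choose_spec.2.2, hσ]
    · intro t t' hne
      exact hval_zero _ _ hne
    · intro t
      rw [evA_PP_self K n _ k hkn3]
      norm_num
  have hfin : (TknSet K n k).Finite := by
    apply Set.Finite.subset (Set.finite_range fun σ : Equiv.Perm (Fin n) =>
      (assosymIdeal K (Fin n)).mkQ (mono₂ K σ k))
    rintro q ⟨σ, h1, h2, rfl⟩
    exact ⟨σ, rfl⟩
  haveI := hfin.fintype
  refine ⟨hcard, hind, ?_⟩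
  rw [finrank_span_set_eq_card hind, Set.toFinset_card, ← Nat.card_eq_fintype_card]
  exact hcard


end
end

section
/- Let R be an assosymmetric algebra over a field K of characteristic 0, let n ≥ 3, and let a_1, …, a_n ∈ R. Then the element [⋯[[(a_1, a_2, a_3), a_4], a_5], …, a_n] is invariant under every permutation of a_1, …, a_n: for every σ ∈ S_n, [⋯[[(a_{σ(1)}, a_{σ(2)}, a_{σ(3)}), a_{σ(4)}], a_{σ(5)}], …, a_{σ(n)}] = [⋯[[(a_1, a_2, a_3), a_4], a_5], …, a_n]. -/
noncomputable section

/-- An algebra is assosymmetric if `(a,b,c) = (a,c,b) = (b,a,c)` for all `a`, `b`, `c`. -/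
class IsAssosymmetric (R : Type*) [NonUnitalNonAssocRing R] : Prop where
  assoc_swap_right : ∀ a b c : R, assoc' a b c = assoc' a c b
  assoc_swap_left : ∀ a b c : R, assoc' a b c = assoc' b a c

lemma smul_int_cancel (K : Type*) {R : Type*} [Field K] [CharZero K] [AddCommGroup R]
    [Module K R] (n : ℤ) (hn : n ≠ 0) {x y : R} (h : n • x = n • y) : x = y := by
  have hK : ((n : K)) ≠ 0 := by exact_mod_cast hn
  have h' : (n : K) • x = (n : K) • y := by
    rw [Int.cast_smul_eq_zsmul, Int.cast_smul_eq_zsmul]; exact h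
  calc x = (n : K)⁻¹ • ((n : K) • x) := (inv_smul_smul₀ hK x).symm
    _ = (n : K)⁻¹ • ((n : K) • y) := by rw [h']
    _ = y := inv_smul_smul₀ hK y
lemma brk_assoc_swap34 (K : Type*) {R : Type*} [Field K] [CharZero K] [NonUnitalNonAssocRing R] [Module K R] [IsAssosymmetric R] (a b c d : R) : brk (assoc' a b c) d = brk (assoc' a b d) c := by
  have z0 : (d * (assoc' a b c)) - (d * (assoc' a c b)) = 0 := by rw [IsAssosymmetric.assoc_swap_right a b c]; exact sub_self _
  have z1 : ((assoc' a c b) * d) - ((assoc' c a b) * d) = 0 := by rw [IsAssosymmetric.assoc_swap_left a c b]; exact sub_self _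
  have z2 : ((assoc' b a c) * d) - ((assoc' b c a) * d) = 0 := by rw [IsAssosymmetric.assoc_swap_right b a c]; exact sub_self _
  have z3 : (c * (assoc' a b d)) - (c * (assoc' a d b)) = 0 := by rw [IsAssosymmetric.assoc_swap_right a b d]; exact sub_self _
  have z4 : ((assoc' a d b) * c) - ((assoc' d a b) * c) = 0 := by rw [IsAssosymmetric.assoc_swap_left a d b]; exact sub_self _
  have z5 : ((assoc' b a d) * c) - ((assoc' b d a) * c) = 0 := by rw [IsAssosymmetric.assoc_swap_right b a d]; exact sub_self _
  have z6 : ((assoc' a c d) * b) - ((assoc' a d c) * b) = 0 := by rw [IsAssosymmetric.assoc_swap_right a c d]; exact sub_self _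
  have z7 : (b * (assoc' a c d)) - (b * (assoc' c a d)) = 0 := by rw [IsAssosymmetric.assoc_swap_left a c d]; exact sub_self _
  have z8 : ((assoc' a c d) * b) - ((assoc' c a d) * b) = 0 := by rw [IsAssosymmetric.assoc_swap_left a c d]; exact sub_self _
  have z9 : (b * (assoc' a d c)) - (b * (assoc' d a c)) = 0 := by rw [IsAssosymmetric.assoc_swap_left a d c]; exact sub_self _
  have z10 : ((assoc' a d c) * b) - ((assoc' d a c) * b) = 0 := by rw [IsAssosymmetric.assoc_swap_left a d c]; exact sub_self _
  have z11 : (a * (assoc' b c d)) - (a * (assoc' b d c)) = 0 := by rw [IsAssosymmetric.assoc_swap_right b c d]; exact sub_self _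
  have z12 : (a * (assoc' b c d)) - (a * (assoc' c b d)) = 0 := by rw [IsAssosymmetric.assoc_swap_left b c d]; exact sub_self _
  have z13 : (a * (assoc' b d c)) - (a * (assoc' d b c)) = 0 := by rw [IsAssosymmetric.assoc_swap_left b d c]; exact sub_self _
  have z14 : (assoc' (a * b) c d) - (assoc' (a * b) d c) = 0 := by rw [IsAssosymmetric.assoc_swap_right (a * b) c d]; exact sub_self _
  have z15 : (assoc' (a * b) c d) - (assoc' c (a * b) d) = 0 := by rw [IsAssosymmetric.assoc_swap_left (a * b) c d]; exact sub_self _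
  have z16 : (assoc' (b * a) c d) - (assoc' (b * a) d c) = 0 := by rw [IsAssosymmetric.assoc_swap_right (b * a) c d]; exact sub_self _
  have z17 : (assoc' (a * b) d c) - (assoc' d (a * b) c) = 0 := by rw [IsAssosymmetric.assoc_swap_left (a * b) d c]; exact sub_self _
  have z18 : (assoc' (a * c) b d) - (assoc' (a * c) d b) = 0 := by rw [IsAssosymmetric.assoc_swap_right (a * c) b d]; exact sub_self _
  have z19 : (assoc' (c * a) b d) - (assoc' (c * a) d b) = 0 := by rw [IsAssosymmetric.assoc_swap_right (c * a) b d]; exact sub_self _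
  have z20 : (assoc' (c * a) b d) - (assoc' b (c * a) d) = 0 := by rw [IsAssosymmetric.assoc_swap_left (c * a) b d]; exact sub_self _
  have z21 : (assoc' a (b * c) d) - (assoc' (b * c) a d) = 0 := by rw [IsAssosymmetric.assoc_swap_left a (b * c) d]; exact sub_self _
  have z22 : (assoc' a (c * b) d) - (assoc' a d (c * b)) = 0 := by rw [IsAssosymmetric.assoc_swap_right a (c * b) d]; exact sub_self _
  have z23 : (assoc' (a * d) b c) - (assoc' (a * d) c b) = 0 := by rw [IsAssosymmetric.assoc_swap_right (a * d) b c]; exact sub_self _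
  have z24 : (assoc' (d * a) b c) - (assoc' (d * a) c b) = 0 := by rw [IsAssosymmetric.assoc_swap_right (d * a) b c]; exact sub_self _
  have z25 : (assoc' (d * a) b c) - (assoc' b (d * a) c) = 0 := by rw [IsAssosymmetric.assoc_swap_left (d * a) b c]; exact sub_self _
  have z26 : (assoc' a (b * d) c) - (assoc' (b * d) a c) = 0 := by rw [IsAssosymmetric.assoc_swap_left a (b * d) c]; exact sub_self _
  have z27 : (assoc' a (d * b) c) - (assoc' a c (d * b)) = 0 := by rw [IsAssosymmetric.assoc_swap_right a (d * b) c]; exact sub_self _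
  have z28 : (assoc' a b (c * d)) - (assoc' b a (c * d)) = 0 := by rw [IsAssosymmetric.assoc_swap_left a b (c * d)]; exact sub_self _
  have z29 : (assoc' a b (d * c)) - (assoc' b a (d * c)) = 0 := by rw [IsAssosymmetric.assoc_swap_left a b (d * c)]; exact sub_self _
  have z30 : (assoc' (a * c) d b) - (assoc' d (a * c) b) = 0 := by rw [IsAssosymmetric.assoc_swap_left (a * c) d b]; exact sub_self _
  have z31 : (assoc' (a * d) c b) - (assoc' c (a * d) b) = 0 := by rw [IsAssosymmetric.assoc_swap_left (a * d) c b]; exact sub_self _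
  have z32 : (assoc' a c (b * d)) - (assoc' c a (b * d)) = 0 := by rw [IsAssosymmetric.assoc_swap_left a c (b * d)]; exact sub_self _
  have z33 : (assoc' a c (d * b)) - (assoc' c a (d * b)) = 0 := by rw [IsAssosymmetric.assoc_swap_left a c (d * b)]; exact sub_self _
  have z34 : (assoc' a d (b * c)) - (assoc' d a (b * c)) = 0 := by rw [IsAssosymmetric.assoc_swap_left a d (b * c)]; exact sub_self _
  have z35 : (assoc' a d (c * b)) - (assoc' d a (c * b)) = 0 := by rw [IsAssosymmetric.assoc_swap_left a d (c * b)]; exact sub_self _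
  have z36 : (assoc' b (a * c) d) - (assoc' b d (a * c)) = 0 := by rw [IsAssosymmetric.assoc_swap_right b (a * c) d]; exact sub_self _
  have z37 : (assoc' b (a * d) c) - (assoc' b c (a * d)) = 0 := by rw [IsAssosymmetric.assoc_swap_right b (a * d) c]; exact sub_self _
  have key : (2 : ℤ) • ((brk (assoc' a b c) d) - (brk (assoc' a b d) c)) = (-1 : ℤ) • ((d * (assoc' a b c)) - (d * (assoc' a c b))) + (1 : ℤ) • (((assoc' a c b) * d) - ((assoc' c a b) * d)) + (2 : ℤ) • (((assoc' b a c) * d) - ((assoc' b c a) * d)) + (1 : ℤ) • ((c * (assoc' a b d)) - (c * (assoc' a d b))) + (-1 : ℤ) • (((assoc' a d b) * c) - ((assoc' d a b) * c)) + (-2 : ℤ) • (((assoc' b a d) * c) - ((assoc' b d a) * c)) + (-1 : ℤ) • (((assoc' a c d) * b) - ((assoc' a d c) * b)) + (2 : ℤ) • ((b * (assoc' a c d)) - (b * (assoc' c a d))) + (1 : ℤ) • (((assoc' a c d) * b) - ((assoc' c a d) * b)) + (-2 : ℤ) • ((b * (assoc' a d c)) - (b * (assoc' d a c))) + (-1 :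 ℤ) • (((assoc' a d c) * b) - ((assoc' d a c) * b)) + (-1 : ℤ) • ((a * (assoc' b c d)) - (a * (assoc' b d c))) + (-1 : ℤ) • ((a * (assoc' b c d)) - (a * (assoc' c b d))) + (1 : ℤ) • ((a * (assoc' b d c)) - (a * (assoc' d b c))) + (1 : ℤ) • ((assoc' (a * b) c d) - (assoc' (a * b) d c)) + (1 : ℤ) • ((assoc' (a * b) c d) - (assoc' c (a * b) d)) + (-2 : ℤ) • ((assoc' (b * a) c d) - (assoc' (b * a) d c)) + (-1 : ℤ) • ((assoc' (a * b) d c) - (assoc' d (a * b) c)) + (-1 : ℤ) • ((assoc' (a * c) b d) - (assoc' (a * c) d b)) + (-1 : ℤ) • ((assoc' (c * a) b d) - (assoc' (c * a) d b)) + (2 : ℤ) • ((assoc' (c * a) b d) - (assoc' b (c * a) d)) + (-2 : ℤ) • ((assoc' a (b * c) d) - (assoc' (b * c) a d)) + (1 : ℤ) • ((assoc' a (c * b) d) - (assoc' a d (c * b))) + (1 : ℤ) • ((assoc' (a * d) b c) - (assoc' (a * d) c b)) + (1 : ℤ) • ((assoc' (d * a) b c) - (assoc' (d * a) c b)) + (-2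 : ℤ) • ((assoc' (d * a) b c) - (assoc' b (d * a) c)) + (2 : ℤ) • ((assoc' a (b * d) c) - (assoc' (b * d) a c)) + (-1 : ℤ) • ((assoc' a (d * b) c) - (assoc' a c (d * b))) + (2 : ℤ) • ((assoc' a b (c * d)) - (assoc' b a (c * d))) + (-2 : ℤ) • ((assoc' a b (d * c)) - (assoc' b a (d * c))) + (-1 : ℤ) • ((assoc' (a * c) d b) - (assoc' d (a * c) b)) + (1 : ℤ) • ((assoc' (a * d) c b) - (assoc' c (a * d) b)) + (-1 : ℤ) • ((assoc' a c (b * d)) - (assoc' c a (b * d))) + (-1 : ℤ) • ((assoc' a c (d * b)) - (assoc' c a (d * b))) + (1 : ℤ) • ((assoc' a d (b * c)) - (assoc' d a (b * c))) + (1 : ℤ) • ((assoc' a d (c * b)) - (assoc' d a (c * b))) + (2 : ℤ) • ((assoc' b (a * c) d) - (assoc' b d (a * c))) + (-2 : ℤ) • ((assoc' b (a * d) c) - (assoc' b c (a * d))) := by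
    simp only [assoc', brk, mul_sub, sub_mul, mul_add, add_mul, smul_sub, smul_add]
    abel
  rw [z0, z1, z2, z3, z4, z5, z6, z7, z8, z9, z10, z11, z12, z13, z14, z15, z16, z17, z18, z19, z20, z21, z22, z23, z24, z25, z26, z27, z28, z29, z30, z31, z32, z33, z34, z35, z36, z37] at key
  simp only [smul_zero, add_zero, zero_add] at key
  have key0 : (2 : ℤ) • ((brk (assoc' a b c) d) - (brk (assoc' a b d) c)) = (2 : ℤ) • (0 : R) := by rw [smul_zero]; exact key
  exact sub_eq_zero.mp (smul_int_cancel K 2 (by norm_num) key0)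

lemma assoc_brk_eq_zero (K : Type*) {R : Type*} [Field K] [CharZero K] [NonUnitalNonAssocRing R] [Module K R] [IsAssosymmetric R] (a b c d : R) : assoc' a b (brk c d) = (0:R) := by
  have z0 : (d * (assoc' a b c)) - (d * (assoc' a c b)) = 0 := by rw [IsAssosymmetric.assoc_swap_right a b c]; exact sub_self _
  have z1 : ((assoc' a b c) * d) - ((assoc' a c b) * d) = 0 := by rw [IsAssosymmetric.assoc_swap_right a b c]; exact sub_self _
  have z2 : ((assoc' a c b) * d) - ((assoc' c a b) * d) = 0 := by rw [IsAssosymmetric.assoc_swap_left a c b]; exact sub_self _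
  have z3 : (c * (assoc' a b d)) - (c * (assoc' a d b)) = 0 := by rw [IsAssosymmetric.assoc_swap_right a b d]; exact sub_self _
  have z4 : ((assoc' a b d) * c) - ((assoc' a d b) * c) = 0 := by rw [IsAssosymmetric.assoc_swap_right a b d]; exact sub_self _
  have z5 : ((assoc' a d b) * c) - ((assoc' d a b) * c) = 0 := by rw [IsAssosymmetric.assoc_swap_left a d b]; exact sub_self _
  have z6 : ((assoc' a c d) * b) - ((assoc' a d c) * b) = 0 := by rw [IsAssosymmetric.assoc_swap_right a c d]; exact sub_self _
  have z7 : ((assoc' a c d) * b) - ((assoc' c a d) * b) = 0 := by rw [IsAssosymmetric.assoc_swap_left a c d]; exact sub_self _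
  have z8 : ((assoc' a d c) * b) - ((assoc' d a c) * b) = 0 := by rw [IsAssosymmetric.assoc_swap_left a d c]; exact sub_self _
  have z9 : (a * (assoc' b c d)) - (a * (assoc' b d c)) = 0 := by rw [IsAssosymmetric.assoc_swap_right b c d]; exact sub_self _
  have z10 : (a * (assoc' b c d)) - (a * (assoc' c b d)) = 0 := by rw [IsAssosymmetric.assoc_swap_left b c d]; exact sub_self _
  have z11 : (a * (assoc' b d c)) - (a * (assoc' d b c)) = 0 := by rw [IsAssosymmetric.assoc_swap_left b d c]; exact sub_self _
  have z12 : (assoc' (a * b) c d) - (assoc' (a * b) d c) = 0 := by rw [IsAssosymmetric.assoc_swap_right (a * b) c d]; exact sub_self _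
  have z13 : (assoc' (a * b) c d) - (assoc' c (a * b) d) = 0 := by rw [IsAssosymmetric.assoc_swap_left (a * b) c d]; exact sub_self _
  have z14 : (assoc' (a * b) d c) - (assoc' d (a * b) c) = 0 := by rw [IsAssosymmetric.assoc_swap_left (a * b) d c]; exact sub_self _
  have z15 : (assoc' (a * c) b d) - (assoc' (a * c) d b) = 0 := by rw [IsAssosymmetric.assoc_swap_right (a * c) b d]; exact sub_self _
  have z16 : (assoc' (c * a) b d) - (assoc' (c * a) d b) = 0 := by rw [IsAssosymmetric.assoc_swap_right (c * a) b d]; exact sub_self _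
  have z17 : (assoc' a (b * c) d) - (assoc' a d (b * c)) = 0 := by rw [IsAssosymmetric.assoc_swap_right a (b * c) d]; exact sub_self _
  have z18 : (assoc' a (c * b) d) - (assoc' a d (c * b)) = 0 := by rw [IsAssosymmetric.assoc_swap_right a (c * b) d]; exact sub_self _
  have z19 : (assoc' (a * d) b c) - (assoc' (a * d) c b) = 0 := by rw [IsAssosymmetric.assoc_swap_right (a * d) b c]; exact sub_self _
  have z20 : (assoc' (d * a) b c) - (assoc' (d * a) c b) = 0 := by rw [IsAssosymmetric.assoc_swap_right (d * a) b c]; exact sub_self _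
  have z21 : (assoc' a (b * d) c) - (assoc' a c (b * d)) = 0 := by rw [IsAssosymmetric.assoc_swap_right a (b * d) c]; exact sub_self _
  have z22 : (assoc' a (d * b) c) - (assoc' a c (d * b)) = 0 := by rw [IsAssosymmetric.assoc_swap_right a (d * b) c]; exact sub_self _
  have z23 : (assoc' (a * c) d b) - (assoc' d (a * c) b) = 0 := by rw [IsAssosymmetric.assoc_swap_left (a * c) d b]; exact sub_self _
  have z24 : (assoc' (a * d) c b) - (assoc' c (a * d) b) = 0 := by rw [IsAssosymmetric.assoc_swap_left (a * d) c b]; exact sub_self _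
  have z25 : (assoc' a c (b * d)) - (assoc' c a (b * d)) = 0 := by rw [IsAssosymmetric.assoc_swap_left a c (b * d)]; exact sub_self _
  have z26 : (assoc' a c (d * b)) - (assoc' c a (d * b)) = 0 := by rw [IsAssosymmetric.assoc_swap_left a c (d * b)]; exact sub_self _
  have z27 : (assoc' a d (b * c)) - (assoc' d a (b * c)) = 0 := by rw [IsAssosymmetric.assoc_swap_left a d (b * c)]; exact sub_self _
  have z28 : (assoc' a d (c * b)) - (assoc' d a (c * b)) = 0 := by rw [IsAssosymmetric.assoc_swap_left a d (c * b)]; exact sub_self _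
  have key : (2 : ℤ) • ((assoc' a b (brk c d)) - ((0:R))) = (1 : ℤ) • ((d * (assoc' a b c)) - (d * (assoc' a c b))) + (2 : ℤ) • (((assoc' a b c) * d) - ((assoc' a c b) * d)) + (1 : ℤ) • (((assoc' a c b) * d) - ((assoc' c a b) * d)) + (-1 : ℤ) • ((c * (assoc' a b d)) - (c * (assoc' a d b))) + (-2 : ℤ) • (((assoc' a b d) * c) - ((assoc' a d b) * c)) + (-1 : ℤ) • (((assoc' a d b) * c) - ((assoc' d a b) * c)) + (1 : ℤ) • (((assoc' a c d) * b) - ((assoc' a d c) * b)) + (-1 : ℤ) • (((assoc' a c d) * b) - ((assoc' c a d) * b)) + (1 : ℤ) • (((assoc' a d c) * b) - ((assoc' d a c) * b)) + (1 : ℤ) • ((a * (assoc' b c d)) - (a * (assoc' b d c))) + (1 : ℤ) • ((a * (assoc' b c d)) - (a * (assoc' c b d))) + (-1 : ℤ) • ((a * (assoc' b d c)) - (a * (assoc' d b c))) + (-3 : ℤ) • ((assoc' (a * b) c d) - (assoc' (a * b) d c)) + (1 : ℤ) • ((assoc' (a * b) c d) - (assoc' c (a * b) d)) + (-1 : ℤ)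 • ((assoc' (a * b) d c) - (assoc' d (a * b) c)) + (1 : ℤ) • ((assoc' (a * c) b d) - (assoc' (a * c) d b)) + (1 : ℤ) • ((assoc' (c * a) b d) - (assoc' (c * a) d b)) + (2 : ℤ) • ((assoc' a (b * c) d) - (assoc' a d (b * c))) + (-1 : ℤ) • ((assoc' a (c * b) d) - (assoc' a d (c * b))) + (-1 : ℤ) • ((assoc' (a * d) b c) - (assoc' (a * d) c b)) + (-1 : ℤ) • ((assoc' (d * a) b c) - (assoc' (d * a) c b)) + (-2 : ℤ) • ((assoc' a (b * d) c) - (assoc' a c (b * d))) + (1 : ℤ) • ((assoc' a (d * b) c) - (assoc' a c (d * b))) + (1 : ℤ) • ((assoc' (a * c) d b) - (assoc' d (a * c) b)) + (-1 : ℤ) • ((assoc' (a * d) c b) - (assoc' c (a * d) b)) + (-1 : ℤ) • ((assoc' a c (b * d)) - (assoc' c a (b * d))) + (1 : ℤ) • ((assoc' a c (d * b)) - (assoc' c a (d * b))) + (1 : ℤ) • ((assoc' a d (b * c)) - (assoc' d a (b * c))) + (-1 : ℤ) • ((assoc' a d (c * b)) - (assoc' d a (c * b))) := by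
    simp only [assoc', brk, mul_sub, sub_mul, mul_add, add_mul, smul_sub, smul_add]
    abel
  rw [z0, z1, z2, z3, z4, z5, z6, z7, z8, z9, z10, z11, z12, z13, z14, z15, z16, z17, z18, z19, z20, z21, z22, z23, z24, z25, z26, z27, z28] at key
  simp only [smul_zero, add_zero, zero_add] at key
  have key0 : (2 : ℤ) • ((assoc' a b (brk c d)) - ((0:R))) = (2 : ℤ) • (0 : R) := by rw [smul_zero]; exact key
  exact sub_eq_zero.mp (smul_int_cancel K 2 (by norm_num) key0)

lemma brk_brk_sub (K : Type*) {R : Type*} [Field K] [CharZero K] [NonUnitalNonAssocRing R] [Module K R] [IsAssosymmetric R] (a b c : R) : brk (brk a b) c - brk (brk a c) b = brk a (brk b c) := by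
  have z0 : (assoc' a b c) - (assoc' a c b) = 0 := by rw [IsAssosymmetric.assoc_swap_right a b c]; exact sub_self _
  have z1 : (assoc' b a c) - (assoc' b c a) = 0 := by rw [IsAssosymmetric.assoc_swap_right b a c]; exact sub_self _
  have z2 : (assoc' c a b) - (assoc' c b a) = 0 := by rw [IsAssosymmetric.assoc_swap_right c a b]; exact sub_self _
  have key : (1 : ℤ) • ((brk (brk a b) c - brk (brk a c) b) - (brk a (brk b c))) = (1 : ℤ) • ((assoc' a b c) - (assoc' a c b)) + (-1 : ℤ) • ((assoc' b a c) - (assoc' b c a)) + (1 : ℤ) • ((assoc' c a b) - (assoc' c b a)) := by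
    simp only [assoc', brk, mul_sub, sub_mul, mul_add, add_mul, smul_sub, smul_add]
    abel
  rw [z0, z1, z2] at key
  simp only [smul_zero, add_zero, zero_add] at key
  have key0 : (1 : ℤ) • ((brk (brk a b) c - brk (brk a c) b) - (brk a (brk b c))) = (1 : ℤ) • (0 : R) := by rw [smul_zero]; exact key
  exact sub_eq_zero.mp (smul_int_cancel K 1 (by norm_num) key0)

lemma jacobi (K : Type*) {R : Type*} [Field K] [CharZero K] [NonUnitalNonAssocRing R] [Module K R] [IsAssosymmetric R] (a b c : R) : brk (brk a b) c + brk (brk b c) a + brk (brk c a) b = (0:R) := by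
  have z0 : (assoc' a b c) - (assoc' a c b) = 0 := by rw [IsAssosymmetric.assoc_swap_right a b c]; exact sub_self _
  have z1 : (assoc' b a c) - (assoc' b c a) = 0 := by rw [IsAssosymmetric.assoc_swap_right b a c]; exact sub_self _
  have z2 : (assoc' c a b) - (assoc' c b a) = 0 := by rw [IsAssosymmetric.assoc_swap_right c a b]; exact sub_self _
  have key : (1 : ℤ) • ((brk (brk a b) c + brk (brk b c) a + brk (brk c a) b) - ((0:R))) = (1 : ℤ) • ((assoc' a b c) - (assoc' a c b)) + (-1 : ℤ) • ((assoc' b a c) - (assoc' b c a)) + (1 : ℤ) • ((assoc' c a b) - (assoc' c b a)) := by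
    simp only [assoc', brk, mul_sub, sub_mul, mul_add, add_mul, smul_sub, smul_add]
    abel
  rw [z0, z1, z2] at key
  simp only [smul_zero, add_zero, zero_add] at key
  have key0 : (1 : ℤ) • ((brk (brk a b) c + brk (brk b c) a + brk (brk c a) b) - ((0:R))) = (1 : ℤ) • (0 : R) := by rw [smul_zero]; exact key
  exact sub_eq_zero.mp (smul_int_cancel K 1 (by norm_num) key0)
section Structural

variable {R : Type*} [NonUnitalNonAssocRing R]

lemma brk_sub_right (x u v : R) : brk x (u - v) = brk x u - brk x v := by
  simp only [brk, mul_sub, sub_mul]; abel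

lemma brk_zero_left (x : R) : brk (0 : R) x = 0 := by simp [brk]

variable (K : Type*) [Field K] [CharZero K] [Module K R] [IsAssosymmetric R]
include K

/-- `[(a,b,c),[d,e]] = 0`. -/
lemma brk_assoc_brk (a b c d e : R) : brk (assoc' a b c) (brk d e) = 0 := by
  have h1 : brk (assoc' a b c) (brk d e)
      = brk (assoc' a b c) (d * e) - brk (assoc' a b c) (e * d) := by
    rw [show brk d e = d * e - e * d from rfl, brk_sub_right]
  rw [h1, brk_assoc_swap34 K a b c (d * e), brk_assoc_swap34 K a b c (e * d)]
  have h2 : brk (assoc' a b (d * e)) c - brk (assoc' a b (e * d)) c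
      = brk (assoc' a b (d * e) - assoc' a b (e * d)) c := by
    simp only [brk, sub_mul, mul_sub]; abel
  have h3 : assoc' a b (d * e) - assoc' a b (e * d) = assoc' a b (brk d e) := by
    simp only [assoc', brk, mul_sub, sub_mul, mul_add, add_mul]; abel
  rw [h2, h3, assoc_brk_eq_zero K, brk_zero_left]

/-- If `w` commutes with all commutators, so does `[w,x]`. -/
lemma brk_center_step (w : R) (hw : ∀ d e : R, brk w (brk d e) = 0) (x : R) :
    ∀ d e : R, brk (brk w x) (brk d e) = 0 := by
  intro d e
  have j := jacobi K w x (brk d e)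
  have h2 : brk (brk x (brk d e)) w = 0 := by
    rw [show brk (brk x (brk d e)) w = -brk w (brk x (brk d e)) by simp only [brk]; abel,
      hw x (brk d e), neg_zero]
  have h3 : brk (brk (brk d e) w) x = 0 := by
    rw [show brk (brk d e) w = -brk w (brk d e) by simp only [brk]; abel, hw d e, neg_zero,
      brk_zero_left]
  rw [h2, h3] at j
  simpa using j

lemma foldl_brk_center (l : List R) (w : R) (hw : ∀ d e : R, brk w (brk d e) = 0) :
    ∀ d e : R, brk (l.foldl brk w) (brk d e) = 0 := by
  induction l generalizing w with
  | nil => exact hw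
  | cons x l ih => exact ih (brk w x) (brk_center_step K w hw x)

lemma foldl_brk_swap (w : R) (hw : ∀ d e : R, brk w (brk d e) = 0) (x y : R) :
    brk (brk w x) y = brk (brk w y) x := by
  have h := brk_brk_sub K w x y
  rw [hw x y] at h
  exact sub_eq_zero.mp h

/-- Swapping two adjacent entries anywhere does not change `nestedBrk`. -/
lemma nestedBrk_adj_swap (pre : List R) (x y : R) (l : List R) :
    nestedBrk (pre ++ x :: y :: l) = nestedBrk (pre ++ y :: x :: l) := by
  match pre with
  | [] =>
    cases l with
    | nil => rfl
    | cons z rest =>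
      show rest.foldl brk (assoc' x y z) = rest.foldl brk (assoc' y x z)
      rw [IsAssosymmetric.assoc_swap_left x y z]
  | [p] =>
    show l.foldl brk (assoc' p x y) = l.foldl brk (assoc' p y x)
    rw [IsAssosymmetric.assoc_swap_right p x y]
  | [p, q] =>
    show l.foldl brk (brk (assoc' p q x) y) = l.foldl brk (brk (assoc' p q y) x)
    rw [brk_assoc_swap34 K p q x y]
  | p :: q :: r :: pre' =>
    show (pre' ++ x :: y :: l).foldl brk (assoc' p q r)
        = (pre' ++ y :: x :: l).foldl brk (assoc' p q r)
    rw [List.foldl_append, List.foldl_append]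
    show l.foldl brk (brk (brk (pre'.foldl brk (assoc' p q r)) x) y)
        = l.foldl brk (brk (brk (pre'.foldl brk (assoc' p q r)) y) x)
    rw [foldl_brk_swap K (pre'.foldl brk (assoc' p q r))
      (foldl_brk_center K pre' (assoc' p q r) (fun d e => brk_assoc_brk K p q r d e)) x y]

lemma nestedBrk_perm_aux {l₁ l₂ : List R} (h : l₁.Perm l₂) :
    ∀ pre : List R, nestedBrk (pre ++ l₁) = nestedBrk (pre ++ l₂) := by
  induction h with
  | nil => intro pre; rfl
  | cons x h ih =>
    intro pre
    have := ih (pre ++ [x])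
    simpa [List.append_assoc] using this
  | swap x y l => intro pre; exact nestedBrk_adj_swap K pre y x l
  | trans h₁ h₂ ih₁ ih₂ => intro pre; exact (ih₁ pre).trans (ih₂ pre)

end Structural

/-- Lemma 4 (Hentzel–Jacobs–Peresi): in an assosymmetric algebra over a field of
characteristic `0`, the element `[⋯[[(a₁,a₂,a₃),a₄],a₅],…,aₙ]` is invariant under every
permutation of `a₁, …, aₙ`. -/
theorem nestedBrk_perm_invariant (K R : Type*) [Field K] [CharZero K]
    [NonUnitalNonAssocRing R] [Module K R] [IsScalarTower K R R] [SMulCommClass K R R]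
    [IsAssosymmetric R] (n : ℕ) (hn : 3 ≤ n) (a : Fin n → R) (σ : Equiv.Perm (Fin n)) :
    nestedBrk ((List.finRange n).map (a ∘ σ)) = nestedBrk ((List.finRange n).map a) := by
  have hperm : ((List.finRange n).map (a ∘ σ)).Perm ((List.finRange n).map a) := by
    have h1 : (List.finRange n).map (a ∘ σ) = ((List.finRange n).map σ).map a := by
      rw [List.map_map]
    rw [h1]
    refine List.Perm.map a ?_
    refine (List.perm_ext_iff_of_nodup ((List.nodup_finRange n).map σ.injective)
      (List.nodup_finRange n)).mpr ?_
    intro i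
    simp only [List.mem_map, List.mem_finRange, true_and, iff_true]
    exact ⟨σ.symm i, Equiv.apply_symm_apply σ i⟩
  simpa using nestedBrk_perm_aux K hperm []

end
end
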